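/- Let R and S be orthogonal projections on a real Hilbert space H with ker(R) ∩ ker(S) = {0}, r ∈ ran(R), s ∈ ran(S), τ ∈ (0,1), and let f_τ = (1−τ)f₀ + τ f₁ be the minimizer of (1−τ)‖Rf − r‖² + τ‖Sf − s‖². Then ‖R f_τ − r‖ = τ ‖f₁ − f₀‖ and ‖S f_τ − s‖ = (1−τ)‖f₁ − f₀‖. -/

import Mathlib

open scoped RealInnerProductSpace

lemma aux_min_inner {H : Type*} [NormedAddCommGroup H] [InnerProductSpace ℝ H]
    (x y : H) (h : ∀ t : ℝ, ‖x‖ ≤ ‖x + t • y‖) : ⟪x, y⟫ = 0 := by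
  by_contra hc
  set c : ℝ := ⟪x, y⟫ with hcdef
  set d : ℝ := ‖y‖ ^ 2 with hddef
  have hd : 0 ≤ d := sq_nonneg _
  set t : ℝ := -c / (d + 1) with htdef
  have h2 : ‖x + t • y‖ ^ 2 = ‖x‖ ^ 2 + 2 * t * c + t ^ 2 * d := by
    rw [norm_add_sq_real, real_inner_smul_right, norm_smul]
    simp only [Real.norm_eq_abs, mul_pow, sq_abs]
    ring
  have h3 : ‖x‖ ^ 2 ≤ ‖x + t • y‖ ^ 2 :=
    pow_le_pow_left₀ (norm_nonneg x) (h t) 2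
  rw [h2] at h3
  have h4 : 0 ≤ 2 * t * c + t ^ 2 * d := by linarith
  have hdp : (0:ℝ) < d + 1 := by linarith
  rw [htdef] at h4
  have hc2 : 0 < c ^ 2 := by positivity
  have h5 : 0 ≤ (2 * (-c / (d + 1)) * c + (-c / (d + 1)) ^ 2 * d) * (d + 1) ^ 2 :=
    mul_nonneg h4 (by positivity)
  have h6 : (2 * (-c / (d + 1)) * c + (-c / (d + 1)) ^ 2 * d) * (d + 1) ^ 2
      = -c ^ 2 * (d + 2) := by
    field_simp
    ring
  rw [h6] at h5
  nlinarith

/-- Residual norms of the regularized solution `f_τ = (1-τ)f₀ + τf₁`: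
`‖Rf_τ - r‖ = τ‖f₁ - f₀‖` and `‖Sf_τ - s‖ = (1-τ)‖f₁ - f₀‖`. -/
theorem stmt_5
    {H : Type*} [NormedAddCommGroup H] [InnerProductSpace ℝ H] [CompleteSpace H]
    (R S : H →L[ℝ] H)
    (hR : IsSelfAdjoint R) (hRi : R ∘L R = R)
    (hS : IsSelfAdjoint S) (hSi : S ∘L S = S)
    (hker : LinearMap.ker (R : H →ₗ[ℝ] H) ⊓ LinearMap.ker (S : H →ₗ[ℝ] H) = ⊥)
    (r s : H) (hr : r ∈ LinearMap.range (R : H →ₗ[ℝ] H)) (hs : s ∈ LinearMap.range (S : H →ₗ[ℝ] H))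
    (τ : ℝ) (hτ : τ ∈ Set.Ioo (0 : ℝ) 1)
    (f₀ f₁ : H)
    (hf₀ : R f₀ = r ∧ IsMinOn (fun f : H => ‖S f - s‖) {f : H | R f = r} f₀)
    (hf₁ : S f₁ = s ∧ IsMinOn (fun f : H => ‖R f - r‖) {f : H | S f = s} f₁) :
    ‖R ((1 - τ) • f₀ + τ • f₁) - r‖ = τ * ‖f₁ - f₀‖ ∧
    ‖S ((1 - τ) • f₀ + τ • f₁) - s‖ = (1 - τ) * ‖f₁ - f₀‖ := by
  obtain ⟨hf₀r, hf₀m⟩ := hf₀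
  obtain ⟨hf₁s, hf₁m⟩ := hf₁
  have hRsym : ∀ x y : H, ⟪R x, y⟫ = ⟪x, R y⟫ := fun x y =>
    (ContinuousLinearMap.isSelfAdjoint_iff_isSymmetric.mp hR) x y
  have hSsym : ∀ x y : H, ⟪S x, y⟫ = ⟪x, S y⟫ := fun x y =>
    (ContinuousLinearMap.isSelfAdjoint_iff_isSymmetric.mp hS) x y
  have hRR : ∀ z : H, R (R z) = R z := fun z =>
    congrFun (congrArg DFunLike.coe hRi) z
  have hSS : ∀ z : H, S (S z) = S z := fun z =>
    congrFun (congrArg DFunLike.coe hSi) z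
  set u : H := f₀ - f₁ with hu
  set a : H := u - R u with ha
  set b : H := u - S u with hb
  have haR : R a = 0 := by rw [ha, map_sub, hRR, sub_self]
  have hbS : S b = 0 := by rw [hb, map_sub, hSS, sub_self]
  -- variational condition for f₀ in direction a
  have h1 : ⟪S f₀ - s, S a⟫ = 0 := by
    apply aux_min_inner
    intro t
    have hmem : f₀ + t • a ∈ {f : H | R f = r} := by
      simp only [Set.mem_setOf_eq, map_add, map_smul, haR, smul_zero, add_zero, hf₀r]
    have := hf₀m hmem
    simpa [map_add, map_smul, add_sub_right_comm] using this
  -- variational condition for f₁ in direction b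
  have h2 : ⟪R f₁ - r, R b⟫ = 0 := by
    apply aux_min_inner
    intro t
    have hmem : f₁ + t • b ∈ {f : H | S f = s} := by
      simp only [Set.mem_setOf_eq, map_add, map_smul, hbS, smul_zero, add_zero, hf₁s]
    have := hf₁m hmem
    simpa [map_add, map_smul, add_sub_right_comm] using this
  -- rewrite the residuals
  have hres₀ : S f₀ - s = S u := by rw [hu, map_sub, hf₁s]
  have hres₁ : R f₁ - r = -(R u) := by rw [hu, map_sub, ← hf₀r]; abel
  rw [hres₀] at h1
  rw [hres₁] at h2
  have h2' : ⟪R u, R b⟫ = 0 := by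
    rw [inner_neg_left] at h2; linarith
  -- ⟪u, a⟫ = ‖a‖², ⟪u, b⟫ = ‖b‖²
  have hua : ⟪u, a⟫ = ‖a‖ ^ 2 := by
    have : ⟪R u, a⟫ = 0 := by rw [hRsym u a, haR, inner_zero_right]
    have hdecomp : ⟪u, a⟫ = ⟪a, a⟫ + ⟪R u, a⟫ := by
      rw [← inner_add_left]; congr 1; rw [ha]; abel
    rw [hdecomp, this, real_inner_self_eq_norm_sq]; ring
  have hub : ⟪u, b⟫ = ‖b‖ ^ 2 := by
    have : ⟪S u, b⟫ = 0 := by rw [hSsym u b, hbS, inner_zero_right]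
    have hdecomp : ⟪u, b⟫ = ⟪b, b⟫ + ⟪S u, b⟫ := by
      rw [← inner_add_left]; congr 1; rw [hb]; abel
    rw [hdecomp, this, real_inner_self_eq_norm_sq]; ring
  -- ⟪S u, S a⟫ = ‖a‖² - ⟪b, a⟫ and ⟪R u, R b⟫ = ‖b‖² - ⟪a, b⟫
  have e1 : ⟪S u, a⟫ = 0 := by
    have t := hSsym (S u) a
    rw [hSS u] at t
    exact t.trans h1
  have e2 : ⟪R u, b⟫ = 0 := by
    have t := hRsym (R u) b
    rw [hRR u] at t
    exact t.trans h2'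
  have e1' : ‖a‖ ^ 2 - ⟪b, a⟫ = 0 := by
    have : ⟪u - b, a⟫ = ⟪S u, a⟫ := by congr 1; rw [hb]; abel
    rw [e1, inner_sub_left, hua] at this; linarith
  have e2' : ‖b‖ ^ 2 - ⟪a, b⟫ = 0 := by
    have : ⟪u - a, b⟫ = ⟪R u, b⟫ := by congr 1; rw [ha]; abel
    rw [e2, inner_sub_left, hub] at this; linarith
  -- a = b
  have hab : a = b := by
    have hsq : ‖a - b‖ ^ 2 = 0 := by
      rw [norm_sub_sq_real]
      rw [real_inner_comm] at e1'
      linarith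
    have := (pow_eq_zero_iff (two_ne_zero)).mp hsq
    rwa [norm_eq_zero, sub_eq_zero] at this
  -- a = 0 from trivial kernel intersection
  have haz : a = 0 := by
    have : a ∈ LinearMap.ker (R : H →ₗ[ℝ] H) ⊓ LinearMap.ker (S : H →ₗ[ℝ] H) := by
      refine ⟨?_, ?_⟩
      · exact haR
      · rw [hab]; exact hbS
    rw [hker] at this
    exact this
  have hRu : R u = u := by
    have := haz; rw [ha, sub_eq_zero] at this; exact this.symm
  have hSu : S u = u := by
    have := hab ▸ haz; rw [hb, sub_eq_zero] at this; exact this.symm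
  obtain ⟨hτ0, hτ1⟩ := hτ
  constructor
  · have : R ((1 - τ) • f₀ + τ • f₁) - r = τ • (f₁ - f₀) := by
      rw [map_add, map_smul, map_smul]
      have hRf₁ : R f₁ = r - u := by
        have : R u = R f₀ - R f₁ := by rw [hu, map_sub]
        rw [hRu, hf₀r] at this
        rw [this]; abel
      rw [hf₀r, hRf₁, hu]
      module
    rw [this, norm_smul, Real.norm_eq_abs, abs_of_pos hτ0]
  · have : S ((1 - τ) • f₀ + τ • f₁) - s = (1 - τ) • (f₀ - f₁) := by
      rw [map_add, map_smul, map_smul]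
      have hSf₀ : S f₀ = s + u := by
        have h' : S u = S f₀ - S f₁ := by rw [hu, map_sub]
        rw [hSu, hf₁s] at h'
        rw [h']; abel
      rw [hf₁s, hSf₀, hu]
      module
    rw [this, norm_smul, Real.norm_eq_abs, abs_of_pos (by linarith)]
    rw [← neg_sub f₁ f₀, norm_neg]
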